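/- With φ(ξ) = sup_{n ∈ ℤ²} (n₁ξ₁ + n₂ξ₂ - (n₁² + n₁n₂ + n₂²)), let (m₁, m₂) ∈ ℤ² and suppose ξ ∈ ℝ² satisfies |ξ₁ - (2m₁ + m₂)| ≤ 1, |ξ₂ - (m₁ + 2m₂)| ≤ 1, and |(ξ₁ - ξ₂) - (m₁ - m₂)| ≤ 1. Then φ(ξ) = m₁ξ₁ + m₂ξ₂ - (m₁² + m₁m₂ + m₂²). -/
import Mathlib


/-- The tropical theta function φ(ξ) = sup_{n ∈ ℤ²} (n₁ξ₁ + n₂ξ₂ - (n₁² + n₁n₂ + n₂²)). -/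
noncomputable def phi (ξ : ℝ × ℝ) : ℝ :=
  sSup (Set.range fun n : ℤ × ℤ =>
    (n.1 : ℝ) * ξ.1 + (n.2 : ℝ) * ξ.2 -
      ((n.1 : ℝ) ^ 2 + (n.1 : ℝ) * (n.2 : ℝ) + (n.2 : ℝ) ^ 2))

lemma int_le_sq (k : ℤ) : (k : ℝ) ≤ (k : ℝ) ^ 2 := by
  have : k ≤ k ^ 2 := by rcases le_or_gt k 0 with h | h <;> nlinarith
  exact_mod_cast this

lemma neg_int_le_sq (k : ℤ) : -(k : ℝ) ≤ (k : ℝ) ^ 2 := by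
  have h := int_le_sq (-k)
  push_cast at h
  nlinarith [h]

lemma key (x y a b : ℝ) (hx1 : x ≤ x ^ 2) (hx2 : -x ≤ x ^ 2)
    (hy1 : y ≤ y ^ 2) (hy2 : -y ≤ y ^ 2)
    (hs1 : x + y ≤ (x + y) ^ 2) (hs2 : -(x + y) ≤ (x + y) ^ 2)
    (ha : |a| ≤ 1) (hb : |b| ≤ 1) (hab : |a - b| ≤ 1) :
    x * a + y * b ≤ x ^ 2 + x * y + y ^ 2 := by
  rw [abs_le] at ha hb hab
  obtain ⟨ha1, ha2⟩ := ha
  obtain ⟨hb1, hb2⟩ := hb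
  obtain ⟨hab1, hab2⟩ := hab
  rcases le_total 0 x with hx | hx <;>
    rcases le_total 0 y with hy | hy <;>
      rcases le_total 0 (x + y) with hs | hs
  · nlinarith [mul_nonneg hx (by linarith : (0:ℝ) ≤ 1 - a),
      mul_nonneg hy (by linarith : (0:ℝ) ≤ 1 - b), mul_nonneg hx hy]
  · nlinarith [mul_nonneg hx (by linarith : (0:ℝ) ≤ 1 - a),
      mul_nonneg hy (by linarith : (0:ℝ) ≤ 1 - b), mul_nonneg hx hy]
  · nlinarith [mul_nonneg hs (by linarith : (0:ℝ) ≤ 1 - a),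
      mul_nonneg (by linarith : (0:ℝ) ≤ -y) (by linarith : (0:ℝ) ≤ b - a + 1)]
  · nlinarith [mul_nonneg hx (by linarith : (0:ℝ) ≤ 1 - (a - b)),
      mul_nonneg (by linarith : (0:ℝ) ≤ -(x + y)) (by linarith : (0:ℝ) ≤ b + 1)]
  · nlinarith [mul_nonneg (by linarith : (0:ℝ) ≤ -x) (by linarith : (0:ℝ) ≤ a - b + 1),
      mul_nonneg hs (by linarith : (0:ℝ) ≤ 1 - b)]
  · nlinarith [mul_nonneg (by linarith : (0:ℝ) ≤ -(x + y)) (by linarith : (0:ℝ) ≤ a + 1),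
      mul_nonneg hy (by linarith : (0:ℝ) ≤ 1 - (b - a))]
  · nlinarith [mul_nonneg (by linarith : (0:ℝ) ≤ -x) (by linarith : (0:ℝ) ≤ a + 1),
      mul_nonneg (by linarith : (0:ℝ) ≤ -y) (by linarith : (0:ℝ) ≤ b + 1),
      mul_nonneg (by linarith : (0:ℝ) ≤ -x) (by linarith : (0:ℝ) ≤ -y)]
  · nlinarith [mul_nonneg (by linarith : (0:ℝ) ≤ -x) (by linarith : (0:ℝ) ≤ a + 1),
      mul_nonneg (by linarith : (0:ℝ) ≤ -y) (by linarith : (0:ℝ) ≤ b + 1),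
      mul_nonneg (by linarith : (0:ℝ) ≤ -x) (by linarith : (0:ℝ) ≤ -y)]

theorem stmt8 (m₁ m₂ : ℤ) (ξ : ℝ × ℝ)
    (h1 : |ξ.1 - ((2 * m₁ + m₂ : ℤ) : ℝ)| ≤ 1)
    (h2 : |ξ.2 - ((m₁ + 2 * m₂ : ℤ) : ℝ)| ≤ 1)
    (h3 : |(ξ.1 - ξ.2) - ((m₁ - m₂ : ℤ) : ℝ)| ≤ 1) :
    phi ξ = (m₁ : ℝ) * ξ.1 + (m₂ : ℝ) * ξ.2 -
      ((m₁ : ℝ) ^ 2 + (m₁ : ℝ) * (m₂ : ℝ) + (m₂ : ℝ) ^ 2) := by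
  have hub : ∀ n : ℤ × ℤ,
      (n.1 : ℝ) * ξ.1 + (n.2 : ℝ) * ξ.2 -
        ((n.1 : ℝ) ^ 2 + (n.1 : ℝ) * (n.2 : ℝ) + (n.2 : ℝ) ^ 2) ≤
      (m₁ : ℝ) * ξ.1 + (m₂ : ℝ) * ξ.2 -
        ((m₁ : ℝ) ^ 2 + (m₁ : ℝ) * (m₂ : ℝ) + (m₂ : ℝ) ^ 2) := by
    rintro ⟨n₁, n₂⟩
    set a : ℝ := ξ.1 - ((2 * m₁ + m₂ : ℤ) : ℝ) with hadef
    set b : ℝ := ξ.2 - ((m₁ + 2 * m₂ : ℤ) : ℝ) with hbdef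
    have hab : |a - b| ≤ 1 := by
      have : a - b = (ξ.1 - ξ.2) - ((m₁ - m₂ : ℤ) : ℝ) := by
        rw [hadef, hbdef]; push_cast; ring
      rw [this]; exact h3
    have hk := key ((n₁ - m₁ : ℤ) : ℝ) ((n₂ - m₂ : ℤ) : ℝ) a b
      (int_le_sq _) (neg_int_le_sq _) (int_le_sq _) (neg_int_le_sq _)
      (by
        have := int_le_sq ((n₁ - m₁) + (n₂ - m₂))
        push_cast at this ⊢
        linarith)
      (by
        have := neg_int_le_sq ((n₁ - m₁) + (n₂ - m₂))
        push_cast at this ⊢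
        linarith)
      h1 h2 hab
    rw [hadef, hbdef] at hk
    push_cast at hk ⊢
    nlinarith [hk]
  have hmem : (m₁ : ℝ) * ξ.1 + (m₂ : ℝ) * ξ.2 -
      ((m₁ : ℝ) ^ 2 + (m₁ : ℝ) * (m₂ : ℝ) + (m₂ : ℝ) ^ 2) ∈
      Set.range fun n : ℤ × ℤ =>
        (n.1 : ℝ) * ξ.1 + (n.2 : ℝ) * ξ.2 -
          ((n.1 : ℝ) ^ 2 + (n.1 : ℝ) * (n.2 : ℝ) + (n.2 : ℝ) ^ 2) :=
    ⟨(m₁, m₂), rfl⟩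
  exact IsGreatest.csSup_eq ⟨hmem, by rintro x ⟨n, rfl⟩; exact hub n⟩
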